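/- For positive integers m, the points v_i = w(t_i)/‖w(t_i)‖ where w(t) = (1, t, t², ..., t^m) evaluated at 2n'+m distinct reals t_1 < ... < t_{2n'+m}, with signs alternating (i.e., take (−1)^i · w(t_i)/‖w(t_i)‖), have the property that every hyperplane through the origin in ℝ^{m+1} has at least n' of these points strictly on each side. -/

import Mathlib

open Finset Polynomial

lemma gale_flip_count_pos (N n : ℕ) (s : ℕ → ℝ)
    (hflip : 2 * n ≤ ((Finset.range (N - 1)).filter fun k => s k * s (k + 1) < 0).card + 1) :
    n ≤ ((Finset.range N).filter fun k => 0 < s k).card := by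
  classical
  set F := (Finset.range (N - 1)).filter fun k => s k * s (k + 1) < 0 with hF
  set P := (Finset.range N).filter fun k => 0 < s k with hP
  have hmaps : ∀ k ∈ F, (if 0 < s k then k else k + 1) ∈ P := by
    intro k hk
    simp only [hF, Finset.mem_filter, Finset.mem_range] at hk
    obtain ⟨hkN, hneg⟩ := hk
    have hN : k < N ∧ k + 1 < N := by omega
    by_cases h : 0 < s k
    · simp [hP, h, if_pos h, Finset.mem_filter, Finset.mem_range, hN.1]
    · have hk0 : s k ≠ 0 := by intro h0; rw [h0] at hneg; simp at hneg
      have hklt : s k < 0 := lt_of_le_of_ne (not_lt.1 h) hk0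
      have : 0 < s (k + 1) := by nlinarith
      simp [hP, if_neg h, Finset.mem_filter, Finset.mem_range, hN.2, this]
  have hcard : F.card ≤ 2 * P.card := by
    apply Finset.card_le_mul_card_image_of_maps_to hmaps
    intro b _
    have hsub : (F.filter fun k => (if 0 < s k then k else k + 1) = b) ⊆ {b - 1, b} := by
      intro k hk
      simp only [Finset.mem_filter] at hk
      obtain ⟨_, hkb⟩ := hk
      by_cases h : 0 < s k
      · rw [if_pos h] at hkb; simp [hkb]
      · rw [if_neg h] at hkb
        simp only [Finset.mem_insert, Finset.mem_singleton]
        left; omega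
    calc (F.filter fun k => (if 0 < s k then k else k + 1) = b).card
        ≤ ({b - 1, b} : Finset ℕ).card := Finset.card_le_card hsub
      _ ≤ 2 := Finset.card_insert_le _ _ |>.trans (by simp)
  omega

lemma gale_flips_le_natDegree (R : Polynomial ℝ) (hR : R ≠ 0) (N : ℕ) (g : ℕ → ℝ)
    (hg : ∀ k l, k < l → l < N → g k < g l) :
    ((Finset.range (N - 1)).filter fun k => R.eval (g k) * R.eval (g (k + 1)) < 0).card
      ≤ R.natDegree := by
  classical
  set F := (Finset.range (N - 1)).filter
      fun k => R.eval (g k) * R.eval (g (k + 1)) < 0 with hF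
  have hex : ∀ k ∈ F, ∃ x, x ∈ Set.Ioo (g k) (g (k + 1)) ∧ R.eval x = 0 := by
    intro k hk
    simp only [hF, Finset.mem_filter, Finset.mem_range] at hk
    obtain ⟨hkN, hneg⟩ := hk
    have hle : g k ≤ g (k + 1) := le_of_lt (hg k (k + 1) (by omega) (by omega))
    have hcont : ContinuousOn (fun x => R.eval x) (Set.Icc (g k) (g (k + 1))) :=
      R.continuousOn
    rcases mul_neg_iff.1 hneg with ⟨h1, h2⟩ | ⟨h1, h2⟩
    · have := intermediate_value_Ioo' hle hcont
      have h0 : (0 : ℝ) ∈ Set.Ioo (R.eval (g (k + 1))) (R.eval (g k)) := ⟨h2, h1⟩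
      obtain ⟨x, hx, hx0⟩ := this h0
      exact ⟨x, hx, hx0⟩
    · have := intermediate_value_Ioo hle hcont
      have h0 : (0 : ℝ) ∈ Set.Ioo (R.eval (g k)) (R.eval (g (k + 1))) := ⟨h1, h2⟩
      obtain ⟨x, hx, hx0⟩ := this h0
      exact ⟨x, hx, hx0⟩
  choose! x hx1 hx2 using hex
  have hmaps : ∀ k ∈ F, x k ∈ R.roots.toFinset := by
    intro k hk
    rw [Multiset.mem_toFinset, Polynomial.mem_roots hR]
    exact hx2 k hk
  have hlt : ∀ k ∈ F, ∀ l ∈ F, k < l → x k < x l := by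
    intro k hk l hl h
    have hkF := hk; have hlF := hl
    simp only [hF, Finset.mem_filter, Finset.mem_range] at hkF hlF
    have h1 : x k < g (k + 1) := (hx1 k hk).2
    have h2 : g l < x l := (hx1 l hl).1
    have h3 : g (k + 1) ≤ g l := by
      rcases eq_or_lt_of_le (Nat.succ_le_of_lt h) with he | hlt
      · rw [show k + 1 = l from he]
      · exact le_of_lt (hg (k + 1) l hlt (by omega))
    linarith
  have hinj : (↑F : Set ℕ).InjOn x := by
    intro k hk l hl hkl
    by_contra hne
    rcases lt_or_gt_of_ne hne with h | h
    · exact absurd hkl (ne_of_lt (hlt k hk l hl h))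
    · exact absurd hkl.symm (ne_of_lt (hlt l hl k hk h))
  calc F.card ≤ R.roots.toFinset.card := Finset.card_le_card_of_injOn x hmaps hinj
    _ ≤ Multiset.card R.roots := Multiset.toFinset_card_le _
    _ ≤ R.natDegree := Polynomial.card_roots' R

set_option maxHeartbeats 1000000 in

lemma gale_key (n' m : ℕ) (hn' : 0 < n') (hm : 0 < m)
    (t : Fin (2 * n' + m) → ℝ) (ht : StrictMono t)
    (w : ℝ → EuclideanSpace ℝ (Fin (m + 1)))
    (hw : ∀ s, ∀ j : Fin (m + 1), w s j = s ^ (j : ℕ))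
    (v : Fin (2 * n' + m) → EuclideanSpace ℝ (Fin (m + 1)))
    (hv : ∀ i, v i = ((-1 : ℝ) ^ (i : ℕ) / ‖w (t i)‖) • w (t i))
    (f : EuclideanSpace ℝ (Fin (m + 1)) →ₗ[ℝ] ℝ) (hf : f ≠ 0) :
    n' ≤ (Finset.univ.filter fun i => 0 < f (v i)).card := by
  classical
  have hdecomp : ∀ x : EuclideanSpace ℝ (Fin (m + 1)),
      x = ∑ j : Fin (m + 1), x j • EuclideanSpace.single j (1 : ℝ) := by
    intro x
    ext j
    have : (∑ j : Fin (m + 1), x j • EuclideanSpace.single j (1 : ℝ)) j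
        = ∑ j' : Fin (m + 1), x j' * (if j = j' then (1:ℝ) else 0) := by
      rw [WithLp.ofLp_sum, Finset.sum_apply]
      apply Finset.sum_congr rfl
      intro j' _
      rw [PiLp.smul_apply, EuclideanSpace.single_apply, smul_eq_mul]
    rw [this]
    simp
  set P : Polynomial ℝ :=
    ∑ j : Fin (m + 1), Polynomial.C (f (EuclideanSpace.single j 1)) * Polynomial.X ^ (j : ℕ)
    with hPdef
  have hPeval : ∀ s, P.eval s = f (w s) := by
    intro s
    rw [hPdef, Polynomial.eval_finset_sum]
    conv_rhs => rw [hdecomp (w s)]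
    rw [map_sum]
    apply Finset.sum_congr rfl
    intro j _
    rw [map_smul, smul_eq_mul, hw s j, Polynomial.eval_mul, Polynomial.eval_C,
      Polynomial.eval_pow, Polynomial.eval_X]
    ring
  have hPne : P ≠ 0 := by
    intro h0
    apply hf
    have hcoef : ∀ j : Fin (m + 1), f (EuclideanSpace.single j 1) = 0 := by
      intro j
      have h1 : P.coeff (j : ℕ) = f (EuclideanSpace.single j 1) := by
        rw [hPdef, Polynomial.finset_sum_coeff]
        rw [Finset.sum_eq_single j]
        · simp
        · intro j' _ hne
          simp only [Polynomial.coeff_C_mul, Polynomial.coeff_X_pow]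
          rw [if_neg (fun h => hne (Fin.val_injective h).symm), mul_zero]
        · simp
      rw [h0] at h1
      simpa using h1.symm
    apply LinearMap.ext
    intro x
    rw [LinearMap.zero_apply]
    conv_lhs => rw [hdecomp x]
    rw [map_sum]
    simp [hcoef]
  have hPdeg : P.natDegree ≤ m := by
    rw [hPdef]
    apply Polynomial.natDegree_sum_le_of_forall_le
    intro j _
    refine le_trans (Polynomial.natDegree_C_mul_le _ _) ?_
    rw [Polynomial.natDegree_X_pow]
    omega
  have hwnorm : ∀ i, 0 < ‖w (t i)‖ := by
    intro i
    rw [norm_pos_iff]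
    intro h
    have h1 : w (t i) (⟨0, by omega⟩ : Fin (m + 1)) = 1 := by
      rw [hw]; simp
    rw [h] at h1
    simp at h1
  have hfv : ∀ i, f (v i) = ‖w (t i)‖⁻¹ * ((-1 : ℝ) ^ (i : ℕ) * P.eval (t i)) := by
    intro i
    rw [hv, map_smul, smul_eq_mul, hPeval]
    ring
  -- the zero and nonzero index sets
  set Z : Finset (Fin (2 * n' + m)) := Finset.univ.filter fun i => P.eval (t i) = 0 with hZdef
  set NZ : Finset (Fin (2 * n' + m)) := Finset.univ.filter fun i => ¬ P.eval (t i) = 0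
    with hNZdef
  set z := Z.card with hzdef
  set N := NZ.card with hNdef
  have hzN : z + N = 2 * n' + m := by
    rw [hzdef, hNdef, hZdef, hNZdef, Finset.card_filter_add_card_filter_not]
    simp
  -- the polynomial Q with roots at the zero indices
  set Q : Polynomial ℝ := ∏ i ∈ Z, (Polynomial.X - Polynomial.C (t i)) with hQdef
  have hQdvd : Q ∣ P := by
    have hnodup : ((Z.image t).val : Multiset ℝ).Nodup := (Z.image t).nodup
    have hsub : ((Z.image t).val : Multiset ℝ) ⊆ P.roots := by
      intro x hx
      rw [← Finset.mem_def, Finset.mem_image] at hx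
      obtain ⟨i, hi, rfl⟩ := hx
      rw [Polynomial.mem_roots hPne]
      rw [hZdef, Finset.mem_filter] at hi
      exact hi.2
    have hle : ((Z.image t).val : Multiset ℝ) ≤ P.roots :=
      (Multiset.le_iff_subset hnodup).2 hsub
    have hdvd := (Multiset.prod_X_sub_C_dvd_iff_le_roots hPne _).2 hle
    have heq : ((Z.image t).val.map fun a => Polynomial.X - Polynomial.C a).prod = Q := by
      rw [hQdef, ← Finset.prod_eq_multiset_prod,
        Finset.prod_image (fun i _ j _ h => ht.injective h)]
    rwa [heq] at hdvd
  obtain ⟨R, hPQR⟩ := hQdvd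
  have hQmonic : Q.Monic := Polynomial.monic_prod_of_monic _ _
    fun i _ => Polynomial.monic_X_sub_C (t i)
  have hQne : Q ≠ 0 := hQmonic.ne_zero
  have hRne : R ≠ 0 := by
    intro h0
    rw [h0, mul_zero] at hPQR
    exact hPne hPQR
  have hQdeg : Q.natDegree = z := by
    rw [hQdef, Polynomial.natDegree_prod _ _ fun i _ => Polynomial.X_sub_C_ne_zero (t i)]
    simp [hzdef]
  have hdegsum : P.natDegree = z + R.natDegree := by
    rw [hPQR, Polynomial.natDegree_mul hQne hRne, hQdeg]
  have hzm : z ≤ m := by omega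
  have hRdeg : R.natDegree ≤ m - z := by omega
  -- the sign-count function
  set c : Fin (2 * n' + m) → ℕ := fun i => (Z.filter fun j => i < j).card with hcdef
  have hQsign : ∀ i ∈ NZ, 0 < (-1 : ℝ) ^ (c i) * Q.eval (t i) := by
    intro i hi
    have hiZ : i ∉ Z := by
      rw [hNZdef, Finset.mem_filter] at hi
      rw [hZdef, Finset.mem_filter]
      tauto
    have hQev : Q.eval (t i) = ∏ j ∈ Z, (t i - t j) := by
      rw [hQdef, Polynomial.eval_prod]
      simp
    have hsplit : (∏ j ∈ Z, (t i - t j)) =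
        (∏ j ∈ Z.filter fun j => i < j, (t i - t j)) *
        (∏ j ∈ Z.filter fun j => ¬ i < j, (t i - t j)) :=
      (Finset.prod_filter_mul_prod_filter_not Z _ _).symm
    have hA : 0 < ∏ j ∈ Z.filter (fun j => ¬ i < j), (t i - t j) := by
      apply Finset.prod_pos
      intro j hj
      rw [Finset.mem_filter] at hj
      have hji : j < i := by
        rcases lt_trichotomy j i with h | h | h
        · exact h
        · exact absurd (h ▸ hj.1) hiZ
        · exact absurd h hj.2
      have := ht hji
      linarith
    have hB : 0 < ∏ j ∈ Z.filter (fun j => i < j), (t j - t i) := by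
      apply Finset.prod_pos
      intro j hj
      rw [Finset.mem_filter] at hj
      have := ht hj.2
      linarith
    have hneg : (∏ j ∈ Z.filter fun j => i < j, (t i - t j)) =
        (-1 : ℝ) ^ (c i) * ∏ j ∈ Z.filter (fun j => i < j), (t j - t i) := by
      rw [hcdef]
      rw [Finset.prod_congr rfl (g := fun j => (-1 : ℝ) * (t j - t i))
        (fun j _ => by ring)]
      rw [Finset.prod_mul_distrib, Finset.prod_const]
    have hsq : ((-1 : ℝ) ^ (c i)) * ((-1 : ℝ) ^ (c i)) = 1 := by
      rw [← pow_add]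
      exact Even.neg_one_pow ⟨c i, by ring⟩
    rw [hQev, hsplit, hneg]
    calc (0:ℝ) < ((∏ j ∈ Z.filter (fun j => i < j), (t j - t i)) *
          (∏ j ∈ Z.filter (fun j => ¬ i < j), (t i - t j))) := mul_pos hB hA
      _ = (-1 : ℝ) ^ c i *
          ((-1 : ℝ) ^ c i * (∏ j ∈ Z.filter (fun j => i < j), (t j - t i)) *
            ∏ j ∈ Z.filter (fun j => ¬ i < j), (t i - t j)) := by
          rw [show ∀ A B : ℝ, (-1 : ℝ) ^ c i * ((-1 : ℝ) ^ c i * A * B)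
            = ((-1 : ℝ) ^ c i * (-1 : ℝ) ^ c i) * (A * B) from fun A B => by ring,
            hsq, one_mul]
  have hReval_ne : ∀ i ∈ NZ, R.eval (t i) ≠ 0 := by
    intro i hi h0
    rw [hNZdef, Finset.mem_filter] at hi
    exact hi.2 (by rw [hPQR, Polynomial.eval_mul, h0, mul_zero])
  have hsign : ∀ i ∈ NZ,
      (0 < f (v i) ↔ 0 < (-1 : ℝ) ^ ((i : ℕ) + c i) * R.eval (t i)) := by
    intro i hi
    have hsq : ((-1 : ℝ) ^ (c i)) * ((-1 : ℝ) ^ (c i)) = 1 := by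
      rw [← pow_add]
      exact Even.neg_one_pow ⟨c i, by ring⟩
    have h2 : (-1 : ℝ) ^ (i : ℕ) * P.eval (t i) =
        ((-1 : ℝ) ^ ((i : ℕ) + c i) * R.eval (t i)) * ((-1 : ℝ) ^ (c i) * Q.eval (t i)) := by
      rw [hPQR, Polynomial.eval_mul, pow_add]
      rw [show ∀ A B C : ℝ, (C * (-1 : ℝ) ^ c i * A) * ((-1 : ℝ) ^ c i * B)
        = ((-1 : ℝ) ^ c i * (-1 : ℝ) ^ c i) * (C * (B * A)) from fun A B C => by ring,
        hsq, one_mul]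
    rw [hfv i, h2, mul_pos_iff_of_pos_left (inv_pos.2 (hwnorm i)),
      mul_pos_iff_of_pos_right (hQsign i hi)]
  -- enumerate the nonzero indices in increasing order
  have hN0 : 0 < N := by omega
  set a : Fin N ↪o Fin (2 * n' + m) := NZ.orderEmbOfFin hNdef.symm with hadef
  have hamem : ∀ k, a k ∈ NZ := fun k => NZ.orderEmbOfFin_mem hNdef.symm k
  have hrank : ∀ k : Fin N, (NZ.filter fun j => j < a k).card = (k : ℕ) := by
    intro k
    have himg : NZ.filter (fun j => j < a k) =
        (Finset.univ.filter fun k' : Fin N => k' < k).image a := by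
      ext j
      simp only [Finset.mem_filter, Finset.mem_image, Finset.mem_univ, true_and]
      constructor
      · rintro ⟨hjNZ, hjlt⟩
        have hjr : j ∈ Set.range a := by
          rw [hadef, Finset.range_orderEmbOfFin]
          exact hjNZ
        obtain ⟨k', hk'⟩ := hjr
        refine ⟨k', ?_, hk'⟩
        rw [← hk'] at hjlt
        exact a.lt_iff_lt.1 hjlt
      · rintro ⟨k', hk'lt, rfl⟩
        exact ⟨hamem k', a.lt_iff_lt.2 hk'lt⟩
    rw [himg, Finset.card_image_of_injective _ a.injective]
    have hiio : Finset.univ.filter (fun k' : Fin N => k' < k) = Finset.Iio k := by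
      ext k'
      simp [Finset.mem_Iio]
    rw [hiio, Fin.card_Iio]
  have hpar : ∀ k : Fin N, ((a k : ℕ) + c (a k)) = (k : ℕ) + z := by
    intro k
    have hsplit : ((Finset.Iio (a k)).filter fun j => P.eval (t j) = 0).card
        + ((Finset.Iio (a k)).filter fun j => ¬ P.eval (t j) = 0).card
        = (a k : ℕ) := by
      rw [Finset.card_filter_add_card_filter_not, Fin.card_Iio]
    have h2 : (Finset.Iio (a k)).filter (fun j => P.eval (t j) = 0)
        = Z.filter (fun j => j < a k) := by
      ext j
      simp only [Finset.mem_filter, Finset.mem_Iio, hZdef, Finset.mem_univ, true_and]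
      tauto
    have h3 : (Finset.Iio (a k)).filter (fun j => ¬ P.eval (t j) = 0)
        = NZ.filter (fun j => j < a k) := by
      ext j
      simp only [Finset.mem_filter, Finset.mem_Iio, hNZdef, Finset.mem_univ, true_and]
      tauto
    have h4 : (Z.filter fun j => j < a k).card + (Z.filter fun j => ¬ j < a k).card = z :=
      Finset.card_filter_add_card_filter_not _
    have h5 : Z.filter (fun j => ¬ j < a k) = Z.filter (fun j => a k < j) := by
      apply Finset.filter_congr
      intro j hj
      have hne : j ≠ a k := by
        intro he
        have h6 := hamem k
        rw [hNZdef, Finset.mem_filter] at h6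
        rw [hZdef, Finset.mem_filter] at hj
        rw [he] at hj
        exact h6.2 hj.2
      constructor
      · intro h
        exact lt_of_le_of_ne (not_lt.1 h) (Ne.symm hne)
      · intro h
        exact fun hlt => lt_asymm h hlt
    have hc : c (a k) = (Z.filter fun j => a k < j).card := rfl
    have hr := hrank k
    rw [h2, h3] at hsplit
    rw [h5] at h4
    omega
  -- pass to functions on ℕ
  set aN : ℕ → Fin (2 * n' + m) := fun k => if h : k < N then a ⟨k, h⟩ else a ⟨0, hN0⟩
    with haNdef
  have haNmem : ∀ k, aN k ∈ NZ := by
    intro k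
    rw [haNdef]
    dsimp only
    split <;> exact hamem _
  have hgmono : ∀ k l, k < l → l < N → t (aN k) < t (aN l) := by
    intro k l hkl hlN
    rw [haNdef]
    dsimp only
    rw [dif_pos (lt_trans hkl hlN), dif_pos hlN]
    exact ht (a.strictMono (Fin.mk_lt_mk.2 hkl))
  set F := (Finset.range (N - 1)).filter
    (fun k => R.eval (t (aN k)) * R.eval (t (aN (k + 1))) < 0) with hFdef
  have hFle : F.card ≤ m - z :=
    (gale_flips_le_natDegree R hRne N (fun k => t (aN k)) hgmono).trans hRdeg
  set s : ℕ → ℝ := fun k => (-1 : ℝ) ^ (k + z) * R.eval (t (aN k)) with hsdef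
  have hGsub : (Finset.range (N - 1)).filter
      (fun k => ¬ R.eval (t (aN k)) * R.eval (t (aN (k + 1))) < 0)
      ⊆ (Finset.range (N - 1)).filter (fun k => s k * s (k + 1) < 0) := by
    intro k hk
    simp only [Finset.mem_filter, Finset.mem_range] at hk ⊢
    obtain ⟨hkN, hnneg⟩ := hk
    refine ⟨hkN, ?_⟩
    have h1 : R.eval (t (aN k)) ≠ 0 := hReval_ne _ (haNmem k)
    have h2 : R.eval (t (aN (k + 1))) ≠ 0 := hReval_ne _ (haNmem (k + 1))
    have hpos : 0 < R.eval (t (aN k)) * R.eval (t (aN (k + 1))) :=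
      lt_of_le_of_ne (not_lt.1 hnneg) (Ne.symm (mul_ne_zero h1 h2))
    have hm1 : (-1 : ℝ) ^ (k + z) * (-1 : ℝ) ^ (k + 1 + z) = -1 := by
      rw [← pow_add, show (k + z) + (k + 1 + z) = 2 * (k + z) + 1 by ring,
        pow_succ, pow_mul]
      norm_num
    have heq : s k * s (k + 1)
        = -(R.eval (t (aN k)) * R.eval (t (aN (k + 1)))) := by
      rw [hsdef]
      dsimp only
      rw [show ((-1 : ℝ) ^ (k + z) * R.eval (t (aN k))) *
          ((-1 : ℝ) ^ (k + 1 + z) * R.eval (t (aN (k + 1))))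
          = ((-1 : ℝ) ^ (k + z) * (-1 : ℝ) ^ (k + 1 + z)) *
            (R.eval (t (aN k)) * R.eval (t (aN (k + 1)))) from by ring, hm1]
      ring
    rw [heq]
    linarith
  have hGcard : 2 * n' ≤
      ((Finset.range (N - 1)).filter fun k => s k * s (k + 1) < 0).card + 1 := by
    have hsplitc := Finset.card_filter_add_card_filter_not
      (s := Finset.range (N - 1))
      (p := fun k => R.eval (t (aN k)) * R.eval (t (aN (k + 1))) < 0)
    rw [← hFdef] at hsplitc
    rw [Finset.card_range] at hsplitc
    have hG := Finset.card_le_card hGsub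
    omega
  have hpos := gale_flip_count_pos N n' s hGcard
  refine le_trans hpos ?_
  apply Finset.card_le_card_of_injOn aN
  · intro k hk
    rw [Finset.mem_coe] at hk ⊢
    simp only [Finset.mem_filter, Finset.mem_range] at hk
    obtain ⟨hkN, hks⟩ := hk
    rw [Finset.mem_filter]
    refine ⟨Finset.mem_univ _, ?_⟩
    rw [hsign (aN k) (haNmem k)]
    have he : aN k = a ⟨k, hkN⟩ := by rw [haNdef]; exact dif_pos hkN
    have hp := hpar ⟨k, hkN⟩
    rw [hsdef] at hks
    dsimp only at hks
    rw [he] at hks ⊢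
    rw [hp]
    simpa using hks
  · intro k hk l hl he
    simp only [Finset.coe_filter, Set.mem_setOf_eq, Finset.mem_range] at hk hl
    rw [haNdef] at he
    dsimp only at he
    rw [dif_pos hk.1, dif_pos hl.1] at he
    have h7 := a.injective he
    simpa using congrArg Fin.val h7

/-- The alternating-sign moment curve construction proving Gale's lemma: with
`w t = (1, t, t², ..., t^m)` and distinct reals `t 0 < t 1 < ...`, the points
`(-1)^i • w (t i) / ‖w (t i)‖` are such that every hyperplane through the origin in `ℝ^(m+1)`
has at least `n'` of them strictly on each side. -/
theorem gale_moment_curve (n' m : ℕ) (hn' : 0 < n') (hm : 0 < m)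
    (t : Fin (2 * n' + m) → ℝ) (ht : StrictMono t)
    (w : ℝ → EuclideanSpace ℝ (Fin (m + 1)))
    (hw : ∀ s, ∀ j : Fin (m + 1), w s j = s ^ (j : ℕ))
    (v : Fin (2 * n' + m) → EuclideanSpace ℝ (Fin (m + 1)))
    (hv : ∀ i, v i = ((-1 : ℝ) ^ (i : ℕ) / ‖w (t i)‖) • w (t i)) :
    ∀ f : EuclideanSpace ℝ (Fin (m + 1)) →ₗ[ℝ] ℝ, f ≠ 0 →
      n' ≤ (Finset.univ.filter fun i => 0 < f (v i)).card ∧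
      n' ≤ (Finset.univ.filter fun i => f (v i) < 0).card := by
  intro f hf
  constructor
  · exact gale_key n' m hn' hm t ht w hw v hv f hf
  · have h2 := gale_key n' m hn' hm t ht w hw v hv (-f) (neg_ne_zero.2 hf)
    refine le_trans h2 (le_of_eq ?_)
    congr 1
    apply Finset.filter_congr
    intro i _
    simp [neg_pos]
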